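/- arXiv:1607.02998 — 2 statements merged into one kernel-verified Lean document; each statement's English description precedes it below -/
import Mathlib

section
/- Let $T>0$, $c>0$, and $\beta:\mathbb{R}_+\to\mathbb{R}_+$ with $\lim_{t\to 0}\beta(t)/t=0$. If $\varphi:\mathbb{R}_+\to\mathbb{R}_+$ satisfies $\varphi(t)\le (1+(t-s)c)\varphi(s)+\beta(t-s)$ for all $0\le s<t\le T$, then $\varphi(t)\le \varphi(0)e^{ct}$ for all $t\in[0,T]$. -/
open Filter Set

/-- Grönwall-type lemma with perturbation: if `φ(t) ≤ (1+(t-s)c) φ(s) + β(t-s)` for all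
`0 ≤ s < t ≤ T`, where `β(t)/t → 0` as `t → 0`, then `φ(t) ≤ φ(0) e^{c t}` on `[0, T]`. -/
theorem gronwall_with_perturbation
    (T c : ℝ) (hT : 0 < T) (hc : 0 < c)
    (β : ℝ → ℝ) (hβ : ∀ t, 0 ≤ t → 0 ≤ β t)
    (hβ0 : Tendsto (fun t => β t / t) (nhdsWithin 0 (Ioi 0)) (nhds 0))
    (φ : ℝ → ℝ) (hφ : ∀ t, 0 ≤ t → 0 ≤ φ t)
    (h : ∀ s t, 0 ≤ s → s < t → t ≤ T → φ t ≤ (1 + (t - s) * c) * φ s + β (t - s)) :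
    ∀ t ∈ Icc 0 T, φ t ≤ φ 0 * Real.exp (c * t) := by
  intro t ht
  obtain ⟨ht0, htT⟩ := ht
  rcases eq_or_lt_of_le ht0 with h0 | h0
  · subst h0; simp
  -- main case: 0 < t
  have key : ∀ n : ℕ, 1 ≤ n →
      φ t ≤ (1 + c * t / n) ^ n * (φ 0 + n * β (t / n)) := by
    intro n hn
    have hn0 : (0:ℝ) < n := by exact_mod_cast hn
    set d := t / n with hd
    have hdpos : 0 < d := div_pos h0 hn0
    have hnd : (n:ℝ) * d = t := by
      rw [hd]; field_simp
    have main : ∀ k : ℕ, k ≤ n → φ (k * d) ≤ (1 + d * c) ^ k * (φ 0 + k * β d) := by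
      intro k
      induction k with
      | zero => intro _; simp
      | succ k ih =>
        intro hk
        have hk' : k ≤ n := Nat.le_of_succ_le hk
        have h1 := ih hk'
        have hkd : ((k:ℝ) + 1) * d ≤ t := by
          rw [← hnd]
          apply mul_le_mul_of_nonneg_right _ hdpos.le
          exact_mod_cast hk
        have hstep := h (k * d) ((k + 1 : ℕ) * d) (by positivity)
          (by push_cast; nlinarith) (le_trans (by push_cast; exact hkd) htT)
        have hdiff : ((k + 1 : ℕ) : ℝ) * d - (k : ℝ) * d = d := by push_cast; ring
        rw [hdiff] at hstep
        have hpow : (1:ℝ) ≤ (1 + d * c) ^ (k + 1) :=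
          one_le_pow₀ (by nlinarith)
        have hβd := hβ d hdpos.le
        calc φ (((k+1:ℕ)) * d) ≤ (1 + d * c) * φ ((k:ℝ) * d) + β d := hstep
          _ ≤ (1 + d * c) * ((1 + d * c) ^ k * (φ 0 + k * β d)) + (1 + d * c) ^ (k+1) * β d := by
              refine add_le_add (mul_le_mul_of_nonneg_left h1 (by nlinarith)) ?_
              exact le_mul_of_one_le_left hβd hpow
          _ = (1 + d * c) ^ (k+1) * (φ 0 + ((k:ℝ)+1) * β d) := by ring
          _ = (1 + d * c) ^ (k+1) * (φ 0 + ((k+1:ℕ):ℝ) * β d) := by push_cast; ring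
    have := main n le_rfl
    rw [hnd] at this
    have hcomm : 1 + d * c = 1 + c * t / n := by
      rw [hd]; ring
    rw [hcomm] at this
    exact this
  -- take limits
  have hA : Tendsto (fun n : ℕ => (1 + c * t / n) ^ n) atTop (nhds (Real.exp (c * t))) :=
    Real.tendsto_one_add_div_pow_exp (c * t)
  have hB : Tendsto (fun n : ℕ => (n:ℝ) * β (t / n)) atTop (nhds 0) := by
    have h1 : Tendsto (fun n : ℕ => t / (n:ℝ)) atTop (nhdsWithin 0 (Ioi 0)) := by
      apply tendsto_nhdsWithin_of_tendsto_nhds_of_eventually_within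
      · exact tendsto_const_div_atTop_nhds_zero_nat t
      · filter_upwards [eventually_ge_atTop 1] with n hn
        have : (0:ℝ) < n := by exact_mod_cast hn
        exact div_pos h0 this
    have h2 := hβ0.comp h1
    have h3 : Tendsto (fun n : ℕ => t * (β (t / n) / (t / n))) atTop (nhds 0) := by
      simpa using h2.const_mul t
    apply h3.congr'
    filter_upwards [eventually_ge_atTop 1] with n hn
    have hn0 : (0:ℝ) < n := by exact_mod_cast hn
    field_simp
  have hprod : Tendsto (fun n : ℕ => (1 + c * t / n) ^ n * (φ 0 + n * β (t / n)))
      atTop (nhds (Real.exp (c * t) * (φ 0 + 0))) :=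
    hA.mul (tendsto_const_nhds.add hB)
  have := ge_of_tendsto hprod (by filter_upwards [eventually_ge_atTop 1] with n hn using key n hn)
  rw [add_zero, mul_comm] at this
  exact this
end

section
/- Let $a\in\mathbb{R}^d$, $z\in\mathbb{C}$ and $\mu=z(\delta_a-\delta_{-a})$. Then the total variation measure of the convolution exponential $\exp(\mu)$ is symmetric: $|\exp(\mu)|(A)=|\exp(\mu)|(-A)$ for all Borel sets $A$. -/
open MeasureTheory ENNReal Classical
noncomputable section

/-- Integral of a complex-valued function against a complex measure. -/
def cintegral {α : Type*} [MeasurableSpace α] (μ : ComplexMeasure α) (f : α → ℂ) : ℂ :=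
  ((∫ x, f x ∂(ComplexMeasure.re μ).toJordanDecomposition.posPart) -
    (∫ x, f x ∂(ComplexMeasure.re μ).toJordanDecomposition.negPart)) +
  Complex.I * ((∫ x, f x ∂(ComplexMeasure.im μ).toJordanDecomposition.posPart) -
    (∫ x, f x ∂(ComplexMeasure.im μ).toJordanDecomposition.negPart))

/-- Total variation of a complex measure, defined via suprema over finite
decompositions of a set into pairwise disjoint measurable pieces. -/
def tv {α : Type*} [MeasurableSpace α] (μ : ComplexMeasure α) (A : Set α) : ℝ≥0∞ :=
  ⨆ (n : ℕ) (B : Fin n → Set α) (_ : ∀ i, MeasurableSet (B i))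
    (_ : Pairwise (Function.onFun Disjoint B)) (_ : (⋃ i, B i) = A),
    ∑ i, ENNReal.ofReal ‖μ (B i)‖

section Aux

variable {α : Type*} [MeasurableSpace α] [MeasurableSingletonClass α]

lemma jordan_delta_core (a b : α) (hab : a ≠ b) (r : ℝ) (hr : 0 ≤ r)
    (s : SignedMeasure α)
    (hs : ∀ A : Set α, MeasurableSet A →
      s A = r * ((if a ∈ A then 1 else 0) - (if b ∈ A then 1 else 0)))
    (f : α → ℂ) :
    (∫ x, f x ∂s.toJordanDecomposition.posPart) -
      (∫ x, f x ∂s.toJordanDecomposition.negPart) = (r : ℂ) * (f a - f b) := by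
  have hms : (r.toNNReal • Measure.dirac a).MutuallySingular (r.toNNReal • Measure.dirac b) := by
    refine ⟨{a}ᶜ, (measurableSet_singleton a).compl, ?_, ?_⟩
    · simp [Measure.smul_apply, Measure.dirac_apply' _ (measurableSet_singleton a).compl]
    · simp [Measure.smul_apply, Measure.dirac_apply' _ (measurableSet_singleton a), hab.symm]
  set j : JordanDecomposition α :=
    { posPart := r.toNNReal • Measure.dirac a, negPart := r.toNNReal • Measure.dirac b,
      mutuallySingular := hms } with hjdef
  have happ : ∀ (c : α) (A : Set α), MeasurableSet A →
      ((r.toNNReal • Measure.dirac c) A).toReal = r * (if c ∈ A then 1 else 0) := by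
    intro c A hA
    rw [Measure.smul_apply, Measure.dirac_apply' _ hA]
    by_cases hc : c ∈ A
    · simp [Set.indicator_of_mem hc, hc, ENNReal.smul_def, ENNReal.toReal_mul,
        Real.coe_toNNReal _ hr]
    · simp [Set.indicator_of_notMem hc, hc]
  have hj : j.toSignedMeasure = s := by
    ext A hA
    rw [JordanDecomposition.toSignedMeasure, VectorMeasure.sub_apply,
      Measure.toSignedMeasure_apply_measurable hA, Measure.toSignedMeasure_apply_measurable hA,
      hs A hA]
    show (r.toNNReal • Measure.dirac a).real A - (r.toNNReal • Measure.dirac b).real A = _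
    rw [measureReal_def, measureReal_def, happ a A hA, happ b A hA]
    ring
  have hjj : s.toJordanDecomposition = j :=
    JordanDecomposition.toSignedMeasure_injective
      (by rw [SignedMeasure.toSignedMeasure_toJordanDecomposition, hj])
  rw [hjj]
  show (∫ x, f x ∂(r.toNNReal • Measure.dirac a)) - (∫ x, f x ∂(r.toNNReal • Measure.dirac b)) = _
  rw [integral_smul_nnreal_measure, integral_smul_nnreal_measure, integral_dirac, integral_dirac,
    ← smul_sub, NNReal.smul_def, Real.coe_toNNReal _ hr, Complex.real_smul]

lemma jordan_delta (a b : α) (hab : a ≠ b) (r : ℝ)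
    (s : SignedMeasure α)
    (hs : ∀ A : Set α, MeasurableSet A →
      s A = r * ((if a ∈ A then 1 else 0) - (if b ∈ A then 1 else 0)))
    (f : α → ℂ) :
    (∫ x, f x ∂s.toJordanDecomposition.posPart) -
      (∫ x, f x ∂s.toJordanDecomposition.negPart) = (r : ℂ) * (f a - f b) := by
  rcases le_total 0 r with hr | hr
  · exact jordan_delta_core a b hab r hr s hs f
  · have := jordan_delta_core b a hab.symm (-r) (by linarith) s
      (fun A hA => by rw [hs A hA]; ring) f
    rw [this]
    push_cast
    ring

end Aux

lemma cintegral_eq {d : ℕ} (a : EuclideanSpace ℝ (Fin d)) (z : ℂ)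
    (μ : ComplexMeasure (EuclideanSpace ℝ (Fin d)))
    (hμ : ∀ A : Set (EuclideanSpace ℝ (Fin d)), MeasurableSet A →
      μ A = z * ((if a ∈ A then 1 else 0) - (if -a ∈ A then 1 else 0)))
    (f : EuclideanSpace ℝ (Fin d) → ℂ) :
    cintegral μ f = z * (f a - f (-a)) := by
  by_cases ha : a = 0
  · subst ha
    have hre : ComplexMeasure.re μ = 0 := by
      apply VectorMeasure.ext; intro A hA
      simp [ComplexMeasure.re_apply, hμ A hA, neg_zero]
      show (μ A).re = 0
      simp [hμ A hA]
    have him : ComplexMeasure.im μ = 0 := by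
      apply VectorMeasure.ext; intro A hA
      simp [ComplexMeasure.im_apply, hμ A hA, neg_zero]
      show (μ A).im = 0
      simp [hμ A hA]
    rw [cintegral, hre, him, SignedMeasure.toJordanDecomposition_zero]
    simp [JordanDecomposition.zero_posPart, JordanDecomposition.zero_negPart, neg_zero]
  · have hne : a ≠ -a := by
      intro h
      apply ha
      have h2 : (2 : ℝ) • a = 0 := by
        rw [two_smul]; nth_rewrite 2 [h]; exact add_neg_cancel a
      rcases smul_eq_zero.mp h2 with h' | h'
      · norm_num at h'
      · exact h'
    have hre : ∀ A : Set (EuclideanSpace ℝ (Fin d)), MeasurableSet A →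
        (ComplexMeasure.re μ) A
          = z.re * ((if a ∈ A then 1 else 0) - (if -a ∈ A then 1 else 0)) := by
      intro A hA
      rw [ComplexMeasure.re_apply]; show (μ A).re = _; rw [hμ A hA]
      by_cases h1 : a ∈ A <;> by_cases h2 : -a ∈ A <;> simp [h1, h2]
    have him : ∀ A : Set (EuclideanSpace ℝ (Fin d)), MeasurableSet A →
        (ComplexMeasure.im μ) A
          = z.im * ((if a ∈ A then 1 else 0) - (if -a ∈ A then 1 else 0)) := by
      intro A hA
      rw [ComplexMeasure.im_apply]; show (μ A).im = _; rw [hμ A hA]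
      by_cases h1 : a ∈ A <;> by_cases h2 : -a ∈ A <;> simp [h1, h2]
    rw [cintegral, jordan_delta a (-a) hne z.re _ hre f,
      jordan_delta a (-a) hne z.im _ him f]
    conv_rhs => rw [← Complex.re_add_im z]
    ring

/-- For `μ = z (δ_a - δ_{-a})`, the total variation of the convolution exponential
`exp(μ) = ∑ μ^{*n}/n!` is a symmetric measure. -/
theorem tv_exp_symmetric {d : ℕ} (a : EuclideanSpace ℝ (Fin d)) (z : ℂ)
    (μ : ComplexMeasure (EuclideanSpace ℝ (Fin d)))
    (hμ : ∀ A : Set (EuclideanSpace ℝ (Fin d)), MeasurableSet A →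
      μ A = z * ((if a ∈ A then 1 else 0) - (if -a ∈ A then 1 else 0)))
    (P : ℕ → ComplexMeasure (EuclideanSpace ℝ (Fin d)))
    (hP0 : ∀ A, MeasurableSet A →
      P 0 A = if (0 : EuclideanSpace ℝ (Fin d)) ∈ A then 1 else 0)
    (hPrec : ∀ n, ∀ A, MeasurableSet A →
      P (n + 1) A = cintegral μ (fun x => P n {y | y + x ∈ A}))
    (expμ : ComplexMeasure (EuclideanSpace ℝ (Fin d)))
    (hexp : ∀ A, MeasurableSet A → expμ A = ∑' n : ℕ, P n A / (n.factorial : ℂ)) :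
    ∀ A : Set (EuclideanSpace ℝ (Fin d)), MeasurableSet A →
      tv expμ A = tv expμ (Neg.neg ⁻¹' A) := by
  classical
  have hnegm : ∀ A : Set (EuclideanSpace ℝ (Fin d)), MeasurableSet A →
      MeasurableSet (Neg.neg ⁻¹' A) := fun A hA => measurable_neg hA
  have htrans : ∀ (c : EuclideanSpace ℝ (Fin d)) (A : Set (EuclideanSpace ℝ (Fin d))),
      MeasurableSet A → MeasurableSet {y | y + c ∈ A} :=
    fun c A hA => (measurable_add_const c) hA
  have hrec : ∀ n (A : Set (EuclideanSpace ℝ (Fin d))), MeasurableSet A →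
      P (n+1) A = z * (P n {y | y + a ∈ A} - P n {y | y + (-a) ∈ A}) := by
    intro n A hA
    rw [hPrec n A hA]
    exact cintegral_eq a z μ hμ _
  -- parity of the convolution powers under reflection
  have hpar : ∀ n (A : Set (EuclideanSpace ℝ (Fin d))), MeasurableSet A →
      P n (Neg.neg ⁻¹' A) = (-1)^n * P n A := by
    intro n
    induction n with
    | zero =>
      intro A hA
      rw [hP0 _ (hnegm A hA), hP0 _ hA]
      simp [Set.mem_preimage]
    | succ n ih =>
      intro A hA
      have e1 : {y : EuclideanSpace ℝ (Fin d) | y + a ∈ Neg.neg ⁻¹' A}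
          = Neg.neg ⁻¹' {y | y + (-a) ∈ A} := by
        ext y
        simp [Set.mem_preimage, neg_add, add_comm]
      have e2 : {y : EuclideanSpace ℝ (Fin d) | y + (-a) ∈ Neg.neg ⁻¹' A}
          = Neg.neg ⁻¹' {y | y + a ∈ A} := by
        ext y
        simp [Set.mem_preimage, neg_add, add_comm]
      rw [hrec n _ (hnegm A hA), e1, e2, ih _ (htrans (-a) A hA), ih _ (htrans a A hA),
        hrec n A hA]
      ring
  -- support of the convolution powers
  have hsupp : ∀ n (A : Set (EuclideanSpace ℝ (Fin d))), MeasurableSet A →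
      (∀ x ∈ A, ¬ ∃ k : ℤ, x = k • a ∧ (Even k ↔ Even n)) → P n A = 0 := by
    intro n
    induction n with
    | zero =>
      intro A hA h
      rw [hP0 A hA, if_neg]
      intro h0
      exact h 0 h0 ⟨0, by simp, by simp⟩
    | succ n ih =>
      intro A hA h
      have h1 : P n {y | y + a ∈ A} = 0 := by
        apply ih _ (htrans a A hA)
        rintro y hy ⟨k, rfl, hk⟩
        refine h (k • a + a) hy ⟨k + 1, ?_, ?_⟩
        · rw [add_zsmul, one_zsmul]
        · rw [Int.even_add_one, Nat.even_add_one]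
          exact not_iff_not.mpr hk
      have h2 : P n {y | y + (-a) ∈ A} = 0 := by
        apply ih _ (htrans (-a) A hA)
        rintro y hy ⟨k, rfl, hk⟩
        refine h (k • a + -a) hy ⟨k - 1, ?_, ?_⟩
        · rw [sub_zsmul, one_zsmul]
        · rw [Int.even_sub_one, Nat.even_add_one]
          exact not_iff_not.mpr hk
      rw [hrec n A hA, h1, h2]
      ring
  -- uniform bound
  have hbound : ∀ n (A : Set (EuclideanSpace ℝ (Fin d))), MeasurableSet A →
      ‖P n A‖ ≤ (2 * ‖z‖) ^ n := by
    intro n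
    induction n with
    | zero =>
      intro A hA
      rw [hP0 A hA]
      split <;> simp
    | succ n ih =>
      intro A hA
      rw [hrec n A hA, pow_succ, norm_mul]
      have tri : ‖P n {y | y + a ∈ A} - P n {y | y + (-a) ∈ A}‖
          ≤ (2 * ‖z‖) ^ n + (2 * ‖z‖) ^ n := by
        refine le_trans ?_ (add_le_add (ih _ (htrans a A hA)) (ih _ (htrans (-a) A hA)))
        simpa [sub_eq_add_neg] using norm_add_le (P n {y | y + a ∈ A})
          (-(P n {y | y + (-a) ∈ A}))
      calc ‖z‖ * ‖P n {y | y + a ∈ A} - P n {y | y + (-a) ∈ A}‖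
          ≤ ‖z‖ * ((2 * ‖z‖) ^ n + (2 * ‖z‖) ^ n) := by
            exact mul_le_mul_of_nonneg_left tri (norm_nonneg _)
        _ = (2 * ‖z‖) ^ n * (2 * ‖z‖) := by ring
  -- summability
  have hsummable : ∀ (g : ℕ → ℂ), (∀ n, ‖g n‖ ≤ (2 * ‖z‖) ^ n) →
      Summable (fun n => g n / (n.factorial : ℂ)) := by
    intro g hg
    refine Summable.of_norm_bounded (g := fun n => (2 * ‖z‖) ^ n / n.factorial)
      (Real.summable_pow_div_factorial (2 * ‖z‖)) ?_
    intro n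
    rw [norm_div, Complex.norm_natCast,
      div_le_div_iff_of_pos_right (by positivity)]
    exact hg n
  have hsumE : ∀ (A : Set (EuclideanSpace ℝ (Fin d))), MeasurableSet A →
      Summable (fun n => if Even n then P n A / (n.factorial : ℂ) else 0) := by
    intro A hA
    have : (fun n => if Even n then P n A / (n.factorial : ℂ) else 0)
        = fun n => (if Even n then P n A else 0) / (n.factorial : ℂ) := by
      funext n; split <;> simp
    rw [this]
    apply hsummable
    intro n
    split
    · exact hbound n A hA
    · simp only [norm_zero]
      positivity
  have hsumO : ∀ (A : Set (EuclideanSpace ℝ (Fin d))), MeasurableSet A →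
      Summable (fun n => if Even n then (0:ℂ) else P n A / (n.factorial : ℂ)) := by
    intro A hA
    have : (fun n => if Even n then (0:ℂ) else P n A / (n.factorial : ℂ))
        = fun n => (if Even n then 0 else P n A) / (n.factorial : ℂ) := by
      funext n; split <;> simp
    rw [this]
    apply hsummable
    intro n
    split
    · simp only [norm_zero]
      positivity
    · exact hbound n A hA
  -- even/odd decomposition of expμ
  have hCS : ∀ (A : Set (EuclideanSpace ℝ (Fin d))), MeasurableSet A →
      expμ A = (∑' n, if Even n then P n A / (n.factorial : ℂ) else 0)
        + (∑' n, if Even n then (0:ℂ) else P n A / (n.factorial : ℂ)) := by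
    intro A hA
    rw [hexp A hA, ← Summable.tsum_add (hsumE A hA) (hsumO A hA)]
    apply tsum_congr
    intro n
    split <;> simp
  have hCSneg : ∀ (A : Set (EuclideanSpace ℝ (Fin d))), MeasurableSet A →
      expμ (Neg.neg ⁻¹' A) = (∑' n, if Even n then P n A / (n.factorial : ℂ) else 0)
        - (∑' n, if Even n then (0:ℂ) else P n A / (n.factorial : ℂ)) := by
    intro A hA
    rw [hexp _ (hnegm A hA), ← Summable.tsum_sub (hsumE A hA) (hsumO A hA)]
    apply tsum_congr
    intro n
    rw [hpar n A hA]
    rcases Nat.even_or_odd n with h | h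
    · rw [h.neg_one_pow]
      simp [h]
    · rw [h.neg_one_pow]
      simp only [if_neg (Nat.not_even_iff_odd.mpr h)]
      ring
  -- the odd lattice set
  set O : Set (EuclideanSpace ℝ (Fin d)) :=
    if a = 0 then ∅ else {x | ∃ k : ℤ, Odd k ∧ x = k • a} with hOdef
  have hOmeas : MeasurableSet O := by
    rw [hOdef]
    split
    · exact MeasurableSet.empty
    · have hset : {x : EuclideanSpace ℝ (Fin d) | ∃ k : ℤ, Odd k ∧ x = k • a}
          = ⋃ k : ℤ, (if Odd k then {k • a} else ∅) := by
        ext x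
        simp only [Set.mem_iUnion, Set.mem_setOf_eq]
        constructor
        · rintro ⟨k, hk, rfl⟩
          exact ⟨k, by simp [hk]⟩
        · rintro ⟨k, hx⟩
          by_cases hk : Odd k
          · rw [if_pos hk, Set.mem_singleton_iff] at hx
            exact ⟨k, hk, hx⟩
          · rw [if_neg hk] at hx
            exact absurd hx (Set.notMem_empty x)
      rw [hset]
      exact MeasurableSet.iUnion fun k => by
        split
        · exact measurableSet_singleton _
        · exact MeasurableSet.empty
  have hOneg : Neg.neg ⁻¹' O = O := by
    rw [hOdef]
    split
    · simp
    · ext x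
      simp only [Set.mem_preimage, Set.mem_setOf_eq]
      constructor
      · rintro ⟨k, hk, hx⟩
        exact ⟨-k, hk.neg, by rw [neg_zsmul, ← hx, neg_neg]⟩
      · rintro ⟨k, hk, rfl⟩
        exact ⟨-k, hk.neg, by rw [neg_zsmul]⟩
  -- vanishing of odd parts on Oᶜ
  have hOddVanish : ∀ (A : Set (EuclideanSpace ℝ (Fin d))), MeasurableSet A → A ⊆ Oᶜ →
      (∑' n, if Even n then (0:ℂ) else P n A / (n.factorial : ℂ)) = 0 := by
    intro A hA hsub
    have hz : ∀ n, ¬ Even n → P n A = 0 := by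
      intro n hn
      by_cases ha0 : a = 0
      · obtain ⟨m, rfl⟩ : ∃ m, n = m + 1 := ⟨n - 1, by
          rcases n with _ | m
          · exact absurd (Even.zero) hn
          · simp⟩
        rw [hrec m A hA]
        have hAA : {y : EuclideanSpace ℝ (Fin d) | y + a ∈ A} = {y | y + (-a) ∈ A} := by
          rw [ha0]; simp
        rw [hAA]
        ring
      · apply hsupp n A hA
        rintro x hx ⟨k, rfl, hk⟩
        have hodd : Odd k := Int.not_even_iff_odd.mp (fun h => hn (hk.mp h))
        have hmem : (k • a) ∈ O := by
          rw [hOdef, if_neg ha0]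
          exact ⟨k, hodd, rfl⟩
        exact (hsub hx) hmem
    have hfun : (fun n => if Even n then (0:ℂ) else P n A / (n.factorial : ℂ))
        = fun _ => 0 := by
      funext n
      split
      · rfl
      · rw [hz n ‹¬Even n›]
        simp
    rw [hfun, tsum_zero]
  -- vanishing of even parts on O
  have hEvenVanish : ∀ (A : Set (EuclideanSpace ℝ (Fin d))), MeasurableSet A → A ⊆ O →
      (∑' n, if Even n then P n A / (n.factorial : ℂ) else 0) = 0 := by
    intro A hA hsub
    have hz : ∀ n, Even n → P n A = 0 := by
      intro n hn
      by_cases ha0 : a = 0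
      · have hAempty : A = ∅ := by
          rw [hOdef, if_pos ha0] at hsub
          exact Set.subset_eq_empty hsub rfl
        rw [hAempty]
        exact (P n).empty
      · apply hsupp n A hA
        rintro x hx ⟨k, rfl, hk⟩
        have hxO := hsub hx
        rw [hOdef, if_neg ha0] at hxO
        obtain ⟨j, hj, hx'⟩ := hxO
        have hkj : ((k - j : ℤ) : ℝ) • a = 0 := by
          rw [Int.cast_sub, sub_smul, sub_eq_zero, Int.cast_smul_eq_zsmul,
            Int.cast_smul_eq_zsmul]
          exact hx'
        rcases smul_eq_zero.mp hkj with h' | h'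
        · have h'' : (k - j : ℤ) = 0 := by exact_mod_cast h'
          have : k = j := sub_eq_zero.mp h''
          subst this
          exact (Int.not_even_iff_odd.mpr hj) (hk.mpr hn)
        · exact ha0 h'
    have hfun : (fun n => if Even n then P n A / (n.factorial : ℂ) else 0)
        = fun _ => 0 := by
      funext n
      split
      · rw [hz n ‹Even n›]
        simp
      · rfl
    rw [hfun, tsum_zero]
  -- the two key symmetry relations
  have hEq : ∀ (B : Set (EuclideanSpace ℝ (Fin d))), MeasurableSet B →
      expμ (Neg.neg ⁻¹' (B ∩ Oᶜ)) = expμ (B ∩ Oᶜ) := by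
    intro B hB
    have hm : MeasurableSet (B ∩ Oᶜ) := hB.inter hOmeas.compl
    rw [hCSneg _ hm, hCS _ hm, hOddVanish _ hm Set.inter_subset_right]
    ring
  have hOq : ∀ (B : Set (EuclideanSpace ℝ (Fin d))), MeasurableSet B →
      expμ (Neg.neg ⁻¹' (B ∩ O)) = - expμ (B ∩ O) := by
    intro B hB
    have hm : MeasurableSet (B ∩ O) := hB.inter hOmeas
    rw [hCSneg _ hm, hCS _ hm, hEvenVanish _ hm Set.inter_subset_right]
    ring
  -- main inequality
  have main : ∀ (A : Set (EuclideanSpace ℝ (Fin d))), MeasurableSet A →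
      tv expμ A ≤ tv expμ (Neg.neg ⁻¹' A) := by
    intro A hA
    rw [tv]
    refine iSup_le fun n => iSup_le fun B => iSup_le fun hBm => iSup_le fun hBd =>
      iSup_le fun hBu => ?_
    set C : Fin (n + n) → Set (EuclideanSpace ℝ (Fin d)) :=
      fun j => Fin.addCases (fun i => Neg.neg ⁻¹' (B i ∩ Oᶜ))
        (fun i => Neg.neg ⁻¹' (B i ∩ O)) j with hCdef
    have hCleft : ∀ i : Fin n, C (Fin.castAdd n i) = Neg.neg ⁻¹' (B i ∩ Oᶜ) := by
      intro i; rw [hCdef]; simp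
    have hCright : ∀ i : Fin n, C (Fin.natAdd n i) = Neg.neg ⁻¹' (B i ∩ O) := by
      intro i; rw [hCdef]; exact Fin.addCases_right i
    have hCm : ∀ j, MeasurableSet (C j) := by
      intro j
      refine Fin.addCases (motive := fun j => MeasurableSet (C j)) ?_ ?_ j
      · intro i; rw [hCleft]; exact hnegm _ ((hBm i).inter hOmeas.compl)
      · intro i; rw [hCright]; exact hnegm _ ((hBm i).inter hOmeas)
    have hCd : Pairwise (Function.onFun Disjoint C) := by
      intro j k hjk
      unfold Function.onFun
      refine Fin.addCases (motive := fun j => j ≠ k → Disjoint (C j) (C k)) ?_ ?_ j hjk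
      · intro i hik
        refine Fin.addCases (motive := fun k => Fin.castAdd n i ≠ k → Disjoint (C _) (C k))
          ?_ ?_ k hik
        · intro i' hne
          rw [hCleft, hCleft]
          refine Disjoint.preimage _ ?_
          have hii' : i ≠ i' := fun h => hne (by rw [h])
          exact (hBd hii').mono Set.inter_subset_left Set.inter_subset_left
        · intro i' _
          rw [hCleft, hCright]
          refine Disjoint.preimage _ ?_
          exact (disjoint_compl_left : Disjoint Oᶜ O).mono Set.inter_subset_right
            Set.inter_subset_right
      · intro i hik
        refine Fin.addCases (motive := fun k => Fin.natAdd n i ≠ k → Disjoint (C _) (C k))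
          ?_ ?_ k hik
        · intro i' _
          rw [hCright, hCleft]
          refine Disjoint.preimage _ ?_
          exact (disjoint_compl_left : Disjoint Oᶜ O).symm.mono Set.inter_subset_right
            Set.inter_subset_right
        · intro i' hne
          rw [hCright, hCright]
          refine Disjoint.preimage _ ?_
          have hii' : i ≠ i' := fun h => hne (by rw [h])
          exact (hBd hii').mono Set.inter_subset_left Set.inter_subset_left
    have hCu : (⋃ j, C j) = Neg.neg ⁻¹' A := by
      have hsplit : (⋃ j, C j)
          = (⋃ i : Fin n, Neg.neg ⁻¹' (B i ∩ Oᶜ)) ∪ (⋃ i : Fin n, Neg.neg ⁻¹' (B i ∩ O)) := by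
        apply Set.Subset.antisymm
        · refine Set.iUnion_subset fun j => ?_
          refine Fin.addCases (motive := fun j => C j ⊆ _) ?_ ?_ j
          · intro i
            rw [hCleft]
            exact (Set.subset_iUnion (fun i : Fin n => Neg.neg ⁻¹' (B i ∩ Oᶜ)) i).trans
              Set.subset_union_left
          · intro i
            rw [hCright]
            exact (Set.subset_iUnion (fun i : Fin n => Neg.neg ⁻¹' (B i ∩ O)) i).trans
              Set.subset_union_right
        · apply Set.union_subset
          · refine Set.iUnion_subset fun i => ?_
            rw [← hCleft i]
            exact Set.subset_iUnion C (Fin.castAdd n i)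
          · refine Set.iUnion_subset fun i => ?_
            rw [← hCright i]
            exact Set.subset_iUnion C (Fin.natAdd n i)
      rw [hsplit, ← Set.preimage_iUnion, ← Set.preimage_iUnion, ← Set.preimage_union,
        ← Set.iUnion_inter, ← Set.iUnion_inter, hBu, ← Set.inter_union_distrib_left,
        Set.compl_union_self, Set.inter_univ]
    calc (∑ i, ENNReal.ofReal (‖expμ (B i)‖))
        ≤ ∑ i, (ENNReal.ofReal (‖expμ (Neg.neg ⁻¹' (B i ∩ Oᶜ))‖)
            + ENNReal.ofReal (‖expμ (Neg.neg ⁻¹' (B i ∩ O))‖)) := by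
          apply Finset.sum_le_sum
          intro i _
          have hsplit : expμ (B i) = expμ (B i ∩ Oᶜ) + expμ (B i ∩ O) := by
            have hu : (B i ∩ Oᶜ) ∪ (B i ∩ O) = B i := by
              rw [← Set.inter_union_distrib_left, Set.compl_union_self, Set.inter_univ]
            conv_lhs => rw [← hu]
            exact VectorMeasure.of_union (v := expμ)
              ((disjoint_compl_left : Disjoint Oᶜ O).mono Set.inter_subset_right
                Set.inter_subset_right)
              ((hBm i).inter hOmeas.compl) ((hBm i).inter hOmeas)
          rw [hsplit, hEq _ (hBm i), hOq _ (hBm i)]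
          refine le_trans (ENNReal.ofReal_le_ofReal (norm_add_le _ _)) ?_
          rw [ENNReal.ofReal_add (norm_nonneg _) (norm_nonneg _),
            norm_neg]
      _ = ∑ j : Fin (n + n), ENNReal.ofReal (‖expμ (C j)‖) := by
          rw [Fin.sum_univ_add, ← Finset.sum_add_distrib]
          apply Finset.sum_congr rfl
          intro i _
          rw [hCleft, hCright]
      _ ≤ tv expμ (Neg.neg ⁻¹' A) := by
          rw [tv]
          exact le_iSup_of_le (n + n) (le_iSup_of_le C (le_iSup_of_le hCm
            (le_iSup_of_le hCd (le_iSup_of_le hCu le_rfl))))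
  intro A hA
  refine le_antisymm (main A hA) ?_
  have h2 := main _ (hnegm A hA)
  have hAA : Neg.neg ⁻¹' (Neg.neg ⁻¹' A) = A := by
    ext x; simp
  rwa [hAA] at h2

end
end
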